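/- A finite simple graph G is chordal if and only if it admits a perfect elimination ordering, i.e., an ordering v₁, v₂, …, v_n of V(G) such that for each i, the set {v_j : j > i, v_j adjacent to v_i} is a clique. -/

import Mathlib

open Finset

/-- A (nonempty-face) abstract simplicial complex on vertex set `V`:
faces are nonempty finite sets, closed under nonempty subsets. -/
def IsComplex {V : Type*} (X : Set (Finset V)) : Prop :=
  (∀ s ∈ X, s.Nonempty) ∧ ∀ ⦃s t : Finset V⦄, s ∈ X → t ⊆ s → t.Nonempty → t ∈ X

/-- Nonempty independent sets of `G` avoiding the vertex set `U`;
this is the set of simplices of the independence complex `I(G − U)`. -/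
def avoidIndep {V : Type*} (G : SimpleGraph V) (U : Set V) : Set (Finset V) :=
  {s | s.Nonempty ∧ (∀ x ∈ s, x ∉ U) ∧ ∀ x ∈ s, ∀ y ∈ s, ¬ G.Adj x y}

/-- The independence complex of `G` (set of nonempty simplices). -/
def indepComplex {V : Type*} (G : SimpleGraph V) : Set (Finset V) :=
  avoidIndep G ∅

/-- A matching on the Hasse diagram of a simplicial complex `X`. -/
structure IsMatching {V : Type*} (X : Set (Finset V)) (M : Set (Finset V × Finset V)) : Prop where
  left_mem : ∀ p ∈ M, p.1 ∈ X
  right_mem : ∀ p ∈ M, p.2 ∈ X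
  subset : ∀ p ∈ M, p.1 ⊆ p.2
  card_eq : ∀ p ∈ M, p.2.card = p.1.card + 1
  eq_of_shared : ∀ p ∈ M, ∀ q ∈ M,
    p.1 = q.1 ∨ p.1 = q.2 ∨ p.2 = q.1 ∨ p.2 = q.2 → p = q

/-- One step of the modified Hasse diagram: matched edges are reversed (point upwards),
all other Hasse edges point from a simplex to its codimension-1 faces. -/
def matchStep {V : Type*} (X : Set (Finset V)) (M : Set (Finset V × Finset V))
    (σ τ : Finset V) : Prop :=
  σ ∈ X ∧ τ ∈ X ∧
    ((σ, τ) ∈ M ∨ (τ ⊆ σ ∧ σ.card = τ.card + 1 ∧ (τ, σ) ∉ M))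

/-- An acyclic matching: reversing matched edges leaves the Hasse diagram acyclic. -/
def IsAcyclicMatching {V : Type*} (X : Set (Finset V)) (M : Set (Finset V × Finset V)) : Prop :=
  IsMatching X M ∧ ∀ σ, ¬ Relation.TransGen (matchStep X M) σ σ

/-- A critical (unmatched) simplex. -/
def IsCritical {V : Type*} (X : Set (Finset V)) (M : Set (Finset V × Finset V))
    (σ : Finset V) : Prop :=
  σ ∈ X ∧ ∀ p ∈ M, p.1 ≠ σ ∧ p.2 ≠ σ

/-- The number of `d`-dimensional critical simplices. -/
noncomputable def critCount {V : Type*} (X : Set (Finset V)) (M : Set (Finset V × Finset V))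
    (d : ℕ) : ℕ :=
  {σ | IsCritical X M σ ∧ σ.card = d + 1}.ncard

/-- A complex is collapsible if it admits an acyclic matching with a unique critical simplex. -/
def Collapsible {V : Type*} (X : Set (Finset V)) : Prop :=
  ∃ M, IsAcyclicMatching X M ∧ ∃! σ, IsCritical X M σ

/-- A maximal face of a complex. -/
def IsMaximalFace {V : Type*} (X : Set (Finset V)) (σ : Finset V) : Prop :=
  σ ∈ X ∧ ∀ τ ∈ X, σ ⊆ τ → σ = τ

/-- All critical simplices of the matching are maximal faces,
except possibly a single critical 0-simplex. -/
def ExceptOneMaximal {V : Type*} (X : Set (Finset V)) (M : Set (Finset V × Finset V)) : Prop :=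
  (∀ σ, IsCritical X M σ → ¬ IsMaximalFace X σ → σ.card = 1) ∧
  (∀ σ τ, IsCritical X M σ → IsCritical X M τ →
    ¬ IsMaximalFace X σ → ¬ IsMaximalFace X τ → σ = τ)

/-- The geometric realization of a complex, as a subspace of `V → ℝ`. -/
def realizationSet {V : Type*} (X : Set (Finset V)) : Set (V → ℝ) :=
  {f | (∀ v, 0 ≤ f v) ∧ ∃ s ∈ X, (∀ v, f v ≠ 0 ↔ v ∈ s) ∧ ∑ v ∈ s, f v = 1}

/-- The base point of the `d`-dimensional unit sphere. -/
noncomputable def spherePt (d : ℕ) : Metric.sphere (0 : EuclideanSpace ℝ (Fin (d+1))) 1 :=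
  ⟨EuclideanSpace.single 0 1, by simp⟩

/-- Identify all base points of the given spheres with a single external point. -/
noncomputable def WedgeRel (c : ℕ → ℕ) :
    (Unit ⊕ Σ d : ℕ, Fin (c d) × Metric.sphere (0 : EuclideanSpace ℝ (Fin (d+1))) 1) →
    (Unit ⊕ Σ d : ℕ, Fin (c d) × Metric.sphere (0 : EuclideanSpace ℝ (Fin (d+1))) 1) → Prop :=
  fun x y => ∃ d i, x = Sum.inr ⟨d, i, spherePt d⟩ ∧ y = Sum.inl ()

/-- The wedge of spheres with `c d` spheres of dimension `d` (a point if all `c d = 0`). -/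
noncomputable def WedgeOfSpheres (c : ℕ → ℕ) : Type :=
  Quot (WedgeRel c)

noncomputable instance (c : ℕ → ℕ) : TopologicalSpace (WedgeOfSpheres c) :=
  instTopologicalSpaceQuot

/-- A universal vertex: adjacent to every other vertex. -/
def IsUniversal {V : Type*} (G : SimpleGraph V) (u : V) : Prop :=
  ∀ w, w ≠ u → G.Adj u w

/-- A chordal graph: no induced cycle of length at least 4. -/
def Chordal {W : Type*} (H : SimpleGraph W) : Prop :=
  ¬ ∃ n, 4 ≤ n ∧ ∃ f : ZMod n → W, Function.Injective f ∧
    ∀ i j, H.Adj (f i) (f j) ↔ (j = i + 1 ∨ i = j + 1)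

/-- The domination number of a graph. -/
noncomputable def dominationNumber {V : Type*} (G : SimpleGraph V) : ℕ :=
  sInf {n | ∃ S : Finset V, S.card = n ∧ ∀ w, w ∉ S → ∃ x ∈ S, G.Adj x w}

/-- `G` belongs to the family `𝒢 m n`: the blocks are the fibres of `P`
(all nonempty, i.e. `P` surjective), and two distinct vertices are adjacent
iff their block indices are comparable in the product order. -/
def GridGraph {V : Type*} (m n : ℕ) (G : SimpleGraph V)
    (P : V → Fin (m+1) × Fin (n+1)) : Prop :=
  Function.Surjective P ∧ ∀ x y, G.Adj x y ↔ x ≠ y ∧ (P x ≤ P y ∨ P y ≤ P x)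

/-- The closed neighbourhood `N_G[v]`. -/
def closedNbhd {V : Type*} (G : SimpleGraph V) (v : V) : Set V :=
  insert v (G.neighborSet v)

/-- Independent sets of `G` (including `∅`) avoiding the vertex set `U`;
the full set of simplices (with the empty simplex) of `I(G − U)`. -/
def avoidIndepE {V : Type*} (G : SimpleGraph V) (U : Set V) : Set (Finset V) :=
  {s | (∀ x ∈ s, x ∉ U) ∧ ∀ x ∈ s, ∀ y ∈ s, ¬ G.Adj x y}

/-- The independence complex of `G`, including the empty simplex. -/
def indepComplexE {V : Type*} (G : SimpleGraph V) : Set (Finset V) :=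
  avoidIndepE G ∅
set_option linter.unusedSectionVars false

def Simpl {V : Type*} (G : SimpleGraph V) (v : V) : Prop :=
  ∀ a b, G.Adj v a → G.Adj v b → a ≠ b → G.Adj a b

lemma chordal_comap {V W : Type*} {G : SimpleGraph W} (h : Chordal G) {f : V → W}
    (hf : Function.Injective f) : Chordal (G.comap f) := by
  rintro ⟨n, hn, g, hg, hadj⟩
  exact h ⟨n, hn, f ∘ g, hf.comp hg, fun i j => hadj i j⟩

lemma nodup_getElem_inj {α : Type*} {l : List α} (h : l.Nodup) {i j : ℕ}
    (hi : i < l.length) (hj : j < l.length) (he : l[i] = l[j]) : i = j := by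
  have h2 : (⟨i, hi⟩ : Fin l.length) = ⟨j, hj⟩ :=
    List.nodup_iff_injective_get.1 h (by simpa using he)
  simpa using h2

section Sep
variable {V : Type*} [DecidableEq V] (G : SimpleGraph V)

def WL (x y : V) (l : List V) : Prop := List.Chain G.Adj x (l ++ [y])

def Stp (S : Finset V) (p q : V) : Prop := G.Adj p q ∧ p ∉ S ∧ q ∉ S

def Reach (S : Finset V) (p q : V) : Prop := Relation.ReflTransGen (Stp G S) p q

variable {G}

lemma WL_nil {x y : V} : WL G x y [] ↔ G.Adj x y := by simp [WL, List.Chain, List.isChain_pair]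

lemma reach_symm {S : Finset V} {p q : V} (h : Reach G S p q) : Reach G S q p :=
  by
    induction h with
    | refl => exact Relation.ReflTransGen.refl
    | tail _ hs ih => exact Relation.ReflTransGen.head ⟨hs.1.symm, hs.2.2, hs.2.1⟩ ih

lemma reach_notin {S : Finset V} {p q : V} (hp : p ∉ S) (h : Reach G S p q) : q ∉ S := by
  induction h with
  | refl => exact hp
  | tail _ h2 _ => exact h2.2.2

lemma reach_to_list {S : Finset V} {p q : V} (h : Reach G S p q) :
    p = q ∨ ∃ l, WL G p q l ∧ ∀ z ∈ l, Reach G S p z ∧ z ∉ S := by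
  induction h with
  | refl => exact Or.inl rfl
  | tail hpc hcq ih =>
    rename_i c q'
    rcases ih with rfl | ⟨l, hW, hmem⟩
    · right
      exact ⟨[], WL_nil.2 hcq.1, by simp⟩
    · right
      refine ⟨l ++ [c], ?_, ?_⟩
      · rw [WL]
        have he : (l ++ [c]) ++ [q'] = l ++ c :: [q'] := by simp
        rw [he, List.Chain, List.isChain_cons_split]
        exact ⟨hW, List.chain_cons.2 ⟨hcq.1, List.Chain.nil⟩⟩
      · intro z hz
        rcases List.mem_append.1 hz with hz | hz
        · exact hmem z hz
        · simp at hz; subst hz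
          exact ⟨hpc, hcq.2.1⟩

lemma list_to_reach {S : Finset V} {p q : V} {l : List V} (hW : WL G p q l)
    (hp : p ∉ S) (hq : q ∉ S) (hl : ∀ z ∈ l, z ∉ S) : Reach G S p q := by
  induction l generalizing p with
  | nil => exact Relation.ReflTransGen.single ⟨WL_nil.1 hW, hp, hq⟩
  | cons a l ih =>
    rw [WL, List.cons_append, List.Chain, List.chain_cons] at hW
    refine Relation.ReflTransGen.head ⟨hW.1, hp, hl a (by simp)⟩ ?_
    exact ih hW.2 (hl a (by simp)) (fun z hz => hl z (by simp [hz]))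

lemma mem_split_first {α : Type*} {a : α} {l : List α} (h : a ∈ l) :
    ∃ t₁ t₂, l = t₁ ++ a :: t₂ ∧ a ∉ t₁ := by
  classical
  induction l with
  | nil => simp at h
  | cons b l ih =>
    by_cases hb : a = b
    · subst hb; exact ⟨[], l, rfl, by simp⟩
    · have : a ∈ l := by
        rcases List.mem_cons.1 h with h | h
        · exact absurd h hb
        · exact h
      obtain ⟨t₁, t₂, rfl, hnt₁⟩ := ih this
      exact ⟨b :: t₁, t₂, rfl, by simp [hnt₁, hb]⟩

lemma sep_neighbor {S : Finset V} {p q s : V} (hpS : p ∉ S) (hqS : q ∉ S) (hsS : s ∈ S)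
    (hreach' : Reach G (S.erase s) p q) (hsep : ¬ Reach G S p q) :
    ∃ z, Reach G S p z ∧ G.Adj z s := by
  rcases reach_to_list hreach' with rfl | ⟨l, hW, hmem⟩
  · exact absurd Relation.ReflTransGen.refl hsep
  · have hsl : s ∈ l := by
      by_contra hns
      refine hsep (list_to_reach hW hpS hqS ?_)
      intro z hz hzS
      exact (hmem z hz).2 (Finset.mem_erase.2 ⟨fun he => hns (he ▸ hz), hzS⟩)
    obtain ⟨t₁, t₂, heq, hnt₁⟩ := mem_split_first hsl
    have hW' := hW
    rw [WL, heq] at hW'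
    have he : (t₁ ++ s :: t₂) ++ [q] = t₁ ++ s :: (t₂ ++ [q]) := by simp
    rw [he, List.Chain, List.isChain_cons_split] at hW'
    have h1 : List.Chain G.Adj p (t₁ ++ [s]) := hW'.1
    have ht₁S : ∀ z ∈ t₁, z ∉ S := by
      intro z hz hzS
      have hzl : z ∈ l := by rw [heq]; simp [hz]
      exact (hmem z hzl).2 (Finset.mem_erase.2 ⟨fun he' => hnt₁ (he' ▸ hz), hzS⟩)
    rcases List.eq_nil_or_concat t₁ with rfl | ⟨t₀, z, rfl⟩
    · simp only [List.nil_append] at h1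
      exact ⟨p, Relation.ReflTransGen.refl, (List.chain_cons.1 h1).1⟩
    · rw [List.concat_eq_append] at h1 ht₁S
      have he2 : (t₀ ++ [z]) ++ [s] = t₀ ++ z :: [s] := by simp
      rw [he2, List.Chain, List.isChain_cons_split] at h1
      refine ⟨z, ?_, (List.chain_cons.1 h1.2).1⟩
      exact list_to_reach (l := t₀) h1.1 hpS (ht₁S z (by simp))
        (fun z' hz' => ht₁S z' (by simp [hz']))

end Sep

section Paths
variable {V : Type*} {G : SimpleGraph V}

lemma min_path (A : Set V) {x y : V} (hnadj : ¬ G.Adj x y)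
    (hex : ∃ u, (∀ z ∈ u, z ∈ A) ∧ WL G x y u) :
    ∃ u : List V, (∀ z ∈ u, z ∈ A) ∧ WL G x y u ∧ u ≠ [] ∧ u.Nodup ∧
      (∀ i (h : i < u.length), G.Adj x u[i] ↔ i = 0) ∧
      (∀ i (h : i < u.length), G.Adj u[i] y ↔ i = u.length - 1) ∧
      (∀ i j (hi : i < u.length) (hj : j < u.length), i < j →
        (G.Adj u[i] u[j] ↔ j = i + 1)) := by
  classical
  set Q : List V → Prop := fun u => (∀ z ∈ u, z ∈ A) ∧ WL G x y u with hQ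
  have hne : {n | ∃ u, Q u ∧ u.length = n}.Nonempty := by
    obtain ⟨u, hu⟩ := hex; exact ⟨u.length, u, hu, rfl⟩
  obtain ⟨u, hQu, hlen⟩ := Nat.sInf_mem hne
  have hmin : ∀ u', Q u' → u.length ≤ u'.length := by
    intro u' h'; rw [hlen]; exact Nat.sInf_le ⟨u', h', rfl⟩
  obtain ⟨hmemA, hW⟩ := hQu
  have hnil : u ≠ [] := by
    rintro rfl; exact hnadj (WL_nil.1 hW)
  have hsplit : ∀ i (h : i < u.length),
      List.Chain G.Adj x (u.take i ++ [u[i]]) ∧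
      List.Chain G.Adj u[i] (u.drop (i+1) ++ [y]) := by
    intro i h
    have h1 : u ++ [y] = u.take i ++ u[i] :: (u.drop (i+1) ++ [y]) := by
      conv_lhs => rw [← List.take_append_drop i u]
      rw [List.drop_eq_getElem_cons h]
      simp only [List.append_assoc, List.cons_append]
    have h2 := hW
    rw [WL, h1, List.Chain, List.isChain_cons_split] at h2
    exact h2
  have hglue : ∀ i (h : i < u.length) (l : List V), List.Chain G.Adj u[i] (l ++ [y]) →
      WL G x y (u.take i ++ u[i] :: l) := by
    intro i h l hc
    rw [WL]
    have he : (u.take i ++ u[i] :: l) ++ [y] = u.take i ++ u[i] :: (l ++ [y]) := by simp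
    rw [he, List.Chain, List.isChain_cons_split]
    exact ⟨(hsplit i h).1, hc⟩
  have hmemA' : ∀ i (h : i < u.length), u[i] ∈ A := fun i h => hmemA _ (List.getElem_mem h)
  have hdropc : ∀ j (hj : j < u.length),
      u.drop j ++ [y] = u[j] :: (u.drop (j+1) ++ [y]) := by
    intro j hj
    rw [List.drop_eq_getElem_cons hj, List.cons_append]
  have ha : ∀ i (h : i < u.length), G.Adj x u[i] ↔ i = 0 := by
    intro i h
    constructor
    · intro hadj
      by_contra hi0
      have hQ' : Q (u.drop i) := by
        refine ⟨fun z hz => hmemA _ (List.mem_of_mem_drop hz), ?_⟩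
        rw [WL, hdropc i h]
        exact List.chain_cons.2 ⟨hadj, (hsplit i h).2⟩
      have := hmin _ hQ'
      rw [List.length_drop] at this
      omega
    · rintro rfl
      have := (hsplit 0 h).1
      simpa [List.Chain, List.isChain_pair] using this
  have hb : ∀ i (h : i < u.length), G.Adj u[i] y ↔ i = u.length - 1 := by
    intro i h
    constructor
    · intro hadj
      by_contra hi
      have hQ' : Q (u.take i ++ [u[i]]) := by
        refine ⟨?_, hglue i h [] (by simpa [List.Chain, List.isChain_pair] using hadj)⟩
        intro z hz
        rcases List.mem_append.1 hz with hz | hz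
        · exact hmemA _ (List.mem_of_mem_take hz)
        · simp at hz; subst hz; exact hmemA' i h
      have := hmin _ hQ'
      rw [List.length_append, List.length_take] at this
      simp at this
      omega
    · rintro rfl
      have h2 := (hsplit (u.length - 1) h).2
      have he : u.drop (u.length - 1 + 1) = [] := by
        apply List.drop_eq_nil_of_le; omega
      rw [he] at h2
      simpa [List.Chain, List.isChain_pair] using h2
  have hcc : ∀ i j (hi : i < u.length) (hj : j < u.length), i < j →
      (G.Adj u[i] u[j] ↔ j = i + 1) := by
    intro i j hi hj hij
    constructor
    · intro hadj
      by_contra hj1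
      have hQ' : Q (u.take i ++ u[i] :: u[j] :: u.drop (j+1)) := by
        refine ⟨?_, hglue i hi _ ?_⟩
        · intro z hz
          rcases List.mem_append.1 hz with hz | hz
          · exact hmemA _ (List.mem_of_mem_take hz)
          · rcases hz with _ | ⟨_, hz⟩
            · exact hmemA' i hi
            · rcases hz with _ | ⟨_, hz⟩
              · exact hmemA' j hj
              · exact hmemA _ (List.mem_of_mem_drop hz)
        · rw [List.cons_append]
          exact List.chain_cons.2 ⟨hadj, (hsplit j hj).2⟩
      have := hmin _ hQ'
      simp [List.length_append, List.length_take] at this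
      omega
    · rintro rfl
      have h2 := (hsplit i hi).2
      rw [List.drop_eq_getElem_cons hj] at h2
      exact (List.chain_cons.1 h2).1
  have hnd : u.Nodup := by
    rw [List.nodup_iff_injective_get]
    rintro ⟨i, hi⟩ ⟨j, hj⟩ hij
    simp only [List.get_eq_getElem] at hij
    by_contra hne'
    have key : ∀ i j (hi : i < u.length) (hj : j < u.length), i < j → u[i] = u[j] → False := by
      intro i j hi hj hlt heq
      have hQ' : Q (u.take i ++ u[i] :: u.drop (j+1)) := by
        refine ⟨?_, hglue i hi _ ?_⟩
        · intro z hz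
          rcases List.mem_append.1 hz with hz | hz
          · exact hmemA _ (List.mem_of_mem_take hz)
          · rcases hz with _ | ⟨_, hz⟩
            · exact hmemA' i hi
            · exact hmemA _ (List.mem_of_mem_drop hz)
        · rw [heq]; exact (hsplit j hj).2
      have := hmin _ hQ'
      simp [List.length_append, List.length_take] at this
      omega
    rcases lt_trichotomy i j with h | h | h
    · exact key i j hi hj h hij
    · subst h; exact hne' rfl
    · exact key j i hj hi h hij.symm
  exact ⟨u, hmemA, hW, hnil, hnd, ha, hb, hcc⟩

end Paths

section Cyc
variable {V : Type*} {G : SimpleGraph V}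

lemma cycle_absurd {x y : V} (hxy : x ≠ y) (hnadj : ¬ G.Adj x y)
    {u w : List V} (hune : u ≠ []) (hwne : w ≠ [])
    (hndu : u.Nodup) (hndw : w.Nodup)
    (hxu : x ∉ u) (hyu : y ∉ u) (hxw : x ∉ w) (hyw : y ∉ w)
    (hcross : ∀ p ∈ u, ∀ q ∈ w, p ≠ q ∧ ¬ G.Adj p q)
    (hU1u : ∀ i (h : i < u.length), G.Adj x u[i] ↔ i = 0)
    (hU2u : ∀ i (h : i < u.length), G.Adj u[i] y ↔ i = u.length - 1)
    (hU3u : ∀ i j (hi : i < u.length) (hj : j < u.length), i < j →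
      (G.Adj u[i] u[j] ↔ j = i + 1))
    (hU1w : ∀ i (h : i < w.length), G.Adj x w[i] ↔ i = 0)
    (hU2w : ∀ i (h : i < w.length), G.Adj w[i] y ↔ i = w.length - 1)
    (hU3w : ∀ i j (hi : i < w.length) (hj : j < w.length), i < j →
      (G.Adj w[i] w[j] ↔ j = i + 1)) :
    ¬ Chordal G := by
  intro hch
  apply hch
  have hs : 1 ≤ u.length := by
    cases u with
    | nil => exact absurd rfl hune
    | cons a l => simp
  have ht : 1 ≤ w.length := by
    cases w with
    | nil => exact absurd rfl hwne
    | cons a l => simp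
  set s := u.length with hsdef
  set t := w.length with htdef
  set n := s + t + 2 with hndef
  have hn4 : 4 ≤ n := by omega
  set c : ℕ → V := fun k =>
    if hk0 : k = 0 then x
    else if hk1 : k ≤ s then u[k-1]'(by omega)
    else if hk2 : k = s + 1 then y
    else if hk3 : k < n then w[n-1-k]'(by omega) else x
    with hc
  have hc0 : c 0 = x := by simp only [hc]; simp
  have hcu : ∀ k (h1 : 1 ≤ k) (h2 : k ≤ s), c k = u[k-1]'(by omega) := by
    intro k h1 h2
    simp only [hc]
    rw [dif_neg (by omega), dif_pos h2]
  have hcy : c (s+1) = y := by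
    simp only [hc]
    rw [dif_neg (by omega), dif_neg (by omega)]
    simp
  have hcw : ∀ k (h1 : s + 2 ≤ k) (h2 : k < n), c k = w[n-1-k]'(by omega) := by
    intro k h1 h2
    simp only [hc]
    rw [dif_neg (by omega), dif_neg (by omega), dif_neg (by omega), dif_pos h2]
  -- injectivity on [0, n)
  have hinj2 : ∀ a b, a ≤ b → b < n → c a = c b → a = b := by
    intro a b hab hbn he
    by_cases ha0 : a = 0
    · subst ha0
      rw [hc0] at he
      by_cases hb0 : b = 0
      · omega
      · by_cases hbs : b ≤ s
        · rw [hcu b (by omega) hbs] at he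
          exact absurd (he ▸ List.getElem_mem _) hxu
        · by_cases hbs1 : b = s + 1
          · subst hbs1; rw [hcy] at he; exact absurd he hxy
          · rw [hcw b (by omega) hbn] at he
            exact absurd (he ▸ List.getElem_mem _) hxw
    · by_cases has : a ≤ s
      · rw [hcu a (by omega) has] at he
        by_cases hbs : b ≤ s
        · rw [hcu b (by omega) hbs] at he
          have := nodup_getElem_inj hndu (by omega) (by omega) he
          omega
        · by_cases hbs1 : b = s + 1
          · subst hbs1; rw [hcy] at he
            exact absurd (he ▸ List.getElem_mem _) hyu
          · rw [hcw b (by omega) hbn] at he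
            exact absurd he (hcross _ (List.getElem_mem _) _ (List.getElem_mem _)).1
      · by_cases has1 : a = s + 1
        · subst has1
          rw [hcy] at he
          by_cases hbs1 : b = s + 1
          · omega
          · rw [hcw b (by omega) hbn] at he
            exact absurd (he ▸ List.getElem_mem _) hyw
        · rw [hcw a (by omega) (by omega)] at he
          rw [hcw b (by omega) hbn] at he
          have := nodup_getElem_inj hndw (by omega) (by omega) he
          omega
  have hinj : ∀ a b, a < n → b < n → c a = c b → a = b := by
    intro a b han hbn he
    rcases le_total a b with h | h
    · exact hinj2 a b h hbn he
    · exact (hinj2 b a h han he.symm).symm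
  -- main adjacency characterization
  have hmain : ∀ a b, a < b → b < n →
      (G.Adj (c a) (c b) ↔ (b = a + 1 ∨ (a = 0 ∧ b = n - 1))) := by
    intro a b hab hbn
    by_cases ha0 : a = 0
    · subst ha0
      rw [hc0]
      by_cases hbs : b ≤ s
      · rw [hcu b (by omega) hbs, hU1u _ (by omega)]
        omega
      · by_cases hbs1 : b = s + 1
        · subst hbs1
          rw [hcy]
          constructor
          · intro h; exact absurd h hnadj
          · intro h; omega
        · rw [hcw b (by omega) hbn, hU1w _ (by omega)]
          omega
    · by_cases has : a ≤ s
      · rw [hcu a (by omega) has]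
        by_cases hbs : b ≤ s
        · rw [hcu b (by omega) hbs, hU3u _ _ (by omega) (by omega) (by omega)]
          omega
        · by_cases hbs1 : b = s + 1
          · subst hbs1
            rw [hcy, hU2u _ (by omega)]
            omega
          · rw [hcw b (by omega) hbn]
            constructor
            · intro h
              exact absurd h (hcross _ (List.getElem_mem _) _ (List.getElem_mem _)).2
            · intro h; omega
      · by_cases has1 : a = s + 1
        · subst has1
          rw [hcy, hcw b (by omega) hbn]
          rw [show (G.Adj y (w[n-1-b]'(by omega)) ↔ G.Adj (w[n-1-b]'(by omega)) y) from G.adj_comm _ _]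
          rw [hU2w _ (by omega)]
          omega
        · rw [hcw a (by omega) (by omega), hcw b (by omega) hbn]
          rw [show (G.Adj (w[n-1-a]'(by omega)) (w[n-1-b]'(by omega)) ↔
              G.Adj (w[n-1-b]'(by omega)) (w[n-1-a]'(by omega))) from G.adj_comm _ _]
          rw [hU3w _ _ (by omega) (by omega) (by omega)]
          omega
  haveI : NeZero n := ⟨by omega⟩
  haveI : Fact (1 < n) := ⟨by omega⟩
  refine ⟨n, hn4, fun i => c i.val, ?_, ?_⟩
  · intro i j he
    exact ZMod.val_injective n (hinj _ _ (ZMod.val_lt i) (ZMod.val_lt j) he)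
  · intro i j
    have hiv := ZMod.val_lt i
    have hjv := ZMod.val_lt j
    have htrans : ∀ i j : ZMod n, (j = i + 1) ↔ (j.val = (i.val + 1) % n) := by
      intro i j
      constructor
      · rintro rfl
        rw [ZMod.val_add, ZMod.val_one]
      · intro h
        apply ZMod.val_injective n
        rw [ZMod.val_add, ZMod.val_one]
        exact h
    have hmod : ∀ k, k < n → (k + 1) % n = if k = n - 1 then 0 else k + 1 := by
      intro k hk
      split
      · next h => subst h; rw [Nat.sub_add_cancel (by omega), Nat.mod_self]
      · next h => exact Nat.mod_eq_of_lt (by omega)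
    rw [htrans i j, htrans j i, hmod _ hiv, hmod _ hjv]
    rcases lt_trichotomy i.val j.val with h | h | h
    · rw [hmain _ _ h hjv]
      split_ifs <;> omega
    · have : i = j := ZMod.val_injective n h
      subst this
      simp only [SimpleGraph.irrefl, false_iff]
      split_ifs <;> omega
    · rw [G.adj_comm, hmain _ _ h hiv]
      split_ifs <;> omega
end Cyc
-- appended to all.lean for testing
section Clique
variable {V : Type*} [DecidableEq V] {G : SimpleGraph V}

lemma sep_clique (hch : Chordal G) {a b : V} (hab : a ≠ b) (hnadj : ¬ G.Adj a b)
    {S : Finset V} (haS : a ∉ S) (hbS : b ∉ S) (hsep : ¬ Reach G S a b)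
    (hminS : ∀ s ∈ S, Reach G (S.erase s) a b) :
    ∀ x ∈ S, ∀ y ∈ S, x ≠ y → G.Adj x y := by
  intro x hx y hy hxy
  by_contra hnxy
  have hcrossAB : ∀ p q, Reach G S a p → Reach G S b q → p ≠ q ∧ ¬ G.Adj p q := by
    intro p q hp hq
    constructor
    · rintro rfl
      exact hsep (hp.trans (reach_symm hq))
    · intro hpq
      exact hsep ((hp.trans (Relation.ReflTransGen.single
        ⟨hpq, reach_notin haS hp, reach_notin hbS hq⟩)).trans (reach_symm hq))
  obtain ⟨za, hza, hzax⟩ := sep_neighbor haS hbS hx (hminS x hx) hsep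
  obtain ⟨za', hza', hzay⟩ := sep_neighbor haS hbS hy (hminS y hy) hsep
  have hsepb : ¬ Reach G S b a := fun h => hsep (reach_symm h)
  obtain ⟨zb, hzb, hzbx⟩ := sep_neighbor hbS haS hx (reach_symm (hminS x hx)) hsepb
  obtain ⟨zb', hzb', hzby⟩ := sep_neighbor hbS haS hy (reach_symm (hminS y hy)) hsepb
  have hwalk : ∀ (p : V), (∀ z1 z2, Reach G S p z1 → Reach G S p z2 → G.Adj z1 x → G.Adj z2 y →
      ∃ l, (∀ z ∈ l, Reach G S p z) ∧ WL G x y l) := by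
    intro p z1 z2 hz1 hz2 h1 h2
    have hr : Reach G S z1 z2 := (reach_symm hz1).trans hz2
    rcases reach_to_list hr with rfl | ⟨l, hW, hmem⟩
    · refine ⟨[z1], by simpa using hz1, ?_⟩
      rw [WL]
      exact List.chain_cons.2 ⟨h1.symm, List.chain_cons.2 ⟨h2, List.Chain.nil⟩⟩
    · refine ⟨z1 :: l ++ [z2], ?_, ?_⟩
      · intro z hz
        rcases List.mem_cons.1 hz with rfl | hz
        · exact hz1
        · rcases List.mem_append.1 hz with hz | hz
          · exact hz1.trans (hmem z hz).1
          · simp at hz; subst hz; exact hz2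
      · rw [WL]
        have he : (z1 :: l ++ [z2]) ++ [y] = z1 :: (l ++ z2 :: [y]) := by simp
        rw [he, List.Chain, List.chain_cons, List.isChain_cons_split]
        exact ⟨h1.symm, hW, List.chain_cons.2 ⟨h2, List.Chain.nil⟩⟩
  obtain ⟨lA, hlA, hlAW⟩ := hwalk a za za' hza hza' hzax hzay
  obtain ⟨lB, hlB, hlBW⟩ := hwalk b zb zb' hzb hzb' hzbx hzby
  obtain ⟨u, humem, huW, hune, hndu, hU1u, hU2u, hU3u⟩ :=
    min_path {v | Reach G S a v} hnxy ⟨lA, hlA, hlAW⟩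
  obtain ⟨w, hwmem, hwW, hwne, hndw, hU1w, hU2w, hU3w⟩ :=
    min_path {v | Reach G S b v} hnxy ⟨lB, hlB, hlBW⟩
  have hxA : ∀ z ∈ u, z ∉ S := fun z hz => reach_notin haS (humem z hz)
  have hxB : ∀ z ∈ w, z ∉ S := fun z hz => reach_notin hbS (hwmem z hz)
  refine cycle_absurd hxy hnxy hune hwne hndu hndw
    (fun h => hxA x h hx) (fun h => hxA y h hy)
    (fun h => hxB x h hx) (fun h => hxB y h hy)
    (fun p hp q hq => hcrossAB p q (humem p hp) (hwmem q hq))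
    hU1u hU2u hU3u hU1w hU2w hU3w hch

end Clique
universe u

theorem dirac_pair : ∀ (n : ℕ) ⦃V : Type u⦄ [Fintype V] [DecidableEq V] (G : SimpleGraph V),
    Fintype.card V ≤ n → Chordal G → ∀ a b : V, a ≠ b → ¬ G.Adj a b →
    ∃ v w : V, v ≠ w ∧ ¬ G.Adj v w ∧ Simpl G v ∧ Simpl G w := by
  intro n
  induction n with
  | zero =>
    intro V _ _ G hcard _ a b _ _
    have : 0 < Fintype.card V := Fintype.card_pos_iff.2 ⟨a⟩
    omega
  | succ n IH =>
    intro V _ _ G hcard hch a b hab hnadj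
    classical
    -- a separator exists
    have hS0 : ∃ S : Finset V, a ∉ S ∧ b ∉ S ∧ ¬ Reach G S a b := by
      refine ⟨Finset.univ \ {a, b}, by simp, by simp, ?_⟩
      have key : ∀ v, Reach G (Finset.univ \ {a, b}) a v → v = a := by
        intro v h
        induction h with
        | refl => rfl
        | @tail m q h1 h2 ih =>
          subst m
          have hq : q ∈ ({a, b} : Finset V) := by
            by_contra hq
            exact h2.2.2 (Finset.mem_sdiff.2 ⟨Finset.mem_univ _, hq⟩)
          rcases Finset.mem_insert.1 hq with rfl | hq
          · exact absurd h2.1 G.irrefl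
          · rw [Finset.mem_singleton] at hq
            subst hq
            exact absurd h2.1 hnadj
      intro h
      exact hab (key b h).symm
    -- minimal cardinality separator
    have hne2 : {k : ℕ | ∃ S : Finset V, (a ∉ S ∧ b ∉ S ∧ ¬ Reach G S a b) ∧ S.card = k}.Nonempty := by
      obtain ⟨S, h1, h2, h3⟩ := hS0
      exact ⟨S.card, S, ⟨h1, h2, h3⟩, rfl⟩
    obtain ⟨S, ⟨haS, hbS, hsep⟩, hScard⟩ := Nat.sInf_mem hne2
    have hminc : ∀ S' : Finset V, a ∉ S' → b ∉ S' → ¬ Reach G S' a b → S.card ≤ S'.card := by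
      intro S' h1 h2 h3
      rw [hScard]
      exact Nat.sInf_le ⟨S', ⟨h1, h2, h3⟩, rfl⟩
    have hminS : ∀ s ∈ S, Reach G (S.erase s) a b := by
      intro s hs
      by_contra h
      have h1 := hminc (S.erase s) (fun hc => haS (Finset.mem_of_mem_erase hc))
        (fun hc => hbS (Finset.mem_of_mem_erase hc)) h
      rw [Finset.card_erase_of_mem hs] at h1
      have : 0 < S.card := Finset.card_pos.2 ⟨s, hs⟩
      omega
    have hclq := sep_clique hch hab hnadj haS hbS hsep hminS
    -- key side lemma
    have side : ∀ p q : V, p ∉ S → q ∉ S → ¬ Reach G S p q →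
        (∀ s ∈ S, Reach G (S.erase s) p q) → ∃ v, Reach G S p v ∧ Simpl G v := by
      intro p q hpS hqS hsep' hmin'
      set T : Set V := {v | Reach G S p v ∨ v ∈ S} with hT
      have hqT : q ∉ T := by
        rintro (h | h)
        · exact hsep' h
        · exact hqS h
      have hcardT : Fintype.card T ≤ n := by
        have hlt := Fintype.card_lt_of_injective_of_notMem (Subtype.val : T → V)
          Subtype.val_injective (b := q) ?_
        · have heq : Fintype.card {x // x ∈ T} = Fintype.card T :=
            Fintype.card_congr (Equiv.refl _)
          omega
        · rintro ⟨⟨v, hv⟩, rfl⟩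
          exact hqT hv
      set G₁ : SimpleGraph T := G.comap Subtype.val with hG₁
      have hch₁ : Chordal G₁ := chordal_comap hch Subtype.val_injective
      have htrans : ∀ (v : V) (hv : Reach G S p v), Simpl G₁ ⟨v, Or.inl hv⟩ → Simpl G v := by
        intro v hv hsim c d hc hd hcd
        have hvS : v ∉ S := reach_notin hpS hv
        have hcT : c ∈ T := by
          by_cases hcS : c ∈ S
          · exact Or.inr hcS
          · exact Or.inl (hv.tail ⟨hc, hvS, hcS⟩)
        have hdT : d ∈ T := by
          by_cases hdS : d ∈ S
          · exact Or.inr hdS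
          · exact Or.inl (hv.tail ⟨hd, hvS, hdS⟩)
        exact hsim ⟨c, hcT⟩ ⟨d, hdT⟩ hc hd (fun h => hcd (congrArg Subtype.val h))
      by_cases hcomp : ∀ v w : T, v ≠ w → G₁.Adj v w
      · refine ⟨p, Relation.ReflTransGen.refl, ?_⟩
        apply htrans p Relation.ReflTransGen.refl
        intro c d hc hd hcd
        exact hcomp c d hcd
      · push_neg at hcomp
        obtain ⟨v, w, hvw, hnvw⟩ := hcomp
        obtain ⟨v', w', hne', hnadj', hsim1, hsim2⟩ := IH G₁ hcardT hch₁ v w hvw hnvw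
        have hone : Reach G S p v'.val ∨ Reach G S p w'.val := by
          rcases v'.2 with h | h
          · exact Or.inl h
          · rcases w'.2 with h2 | h2
            · exact Or.inr h2
            · exact absurd (hclq _ h _ h2 (fun he => hne' (Subtype.ext he))) hnadj'
        rcases hone with h | h
        · refine ⟨v'.val, h, htrans _ h ?_⟩
          have he : (⟨v'.val, Or.inl h⟩ : T) = v' := Subtype.ext rfl
          rw [he]; exact hsim1
        · refine ⟨w'.val, h, htrans _ h ?_⟩
          have he : (⟨w'.val, Or.inl h⟩ : T) = w' := Subtype.ext rfl
          rw [he]; exact hsim2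
    obtain ⟨v, hvA, hvsim⟩ := side a b haS hbS hsep hminS
    obtain ⟨w, hwB, hwsim⟩ := side b a hbS haS (fun h => hsep (reach_symm h))
      (fun s hs => reach_symm (hminS s hs))
    refine ⟨v, w, ?_, ?_, hvsim, hwsim⟩
    · rintro rfl
      exact hsep (hvA.trans (reach_symm hwB))
    · intro hadj
      exact hsep ((hvA.trans (Relation.ReflTransGen.single
        ⟨hadj, reach_notin haS hvA, reach_notin hbS hwB⟩)).trans (reach_symm hwB))

lemma dirac_single {V : Type u} [Fintype V] [DecidableEq V] (G : SimpleGraph V)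
    (hch : Chordal G) (hne : Nonempty V) : ∃ v, Simpl G v := by
  classical
  by_cases h : ∀ a b : V, a ≠ b → G.Adj a b
  · obtain ⟨a⟩ := hne
    exact ⟨a, fun c d _ _ hcd => h c d hcd⟩
  · push_neg at h
    obtain ⟨a, b, hab, hnadj⟩ := h
    obtain ⟨v, _, _, _, hsim, _⟩ := dirac_pair (Fintype.card V) G le_rfl hch a b hab hnadj
    exact ⟨v, hsim⟩
theorem peo_exists : ∀ (n : ℕ) ⦃V : Type u⦄ [Fintype V] [DecidableEq V] (G : SimpleGraph V),
    Fintype.card V = n → Chordal G →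
    ∃ e : Fin n ≃ V, ∀ i j k : Fin n, i < j → i < k → j ≠ k →
      G.Adj (e i) (e j) → G.Adj (e i) (e k) → G.Adj (e j) (e k) := by
  intro n
  induction n with
  | zero =>
    intro V _ _ G hcard _
    refine ⟨(Fintype.equivFinOfCardEq hcard).symm, ?_⟩
    intro i
    exact i.elim0
  | succ n IH =>
    intro V _ _ G hcard hch
    classical
    have hne : Nonempty V := Fintype.card_pos_iff.1 (by omega)
    obtain ⟨v, hv⟩ := dirac_single G hch hne
    have hch' : Chordal (G.comap (Subtype.val : {w : V // w ≠ v} → V)) :=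
      chordal_comap hch Subtype.val_injective
    have hcard' : Fintype.card {w : V // w ≠ v} = n := by
      have h1 : Fintype.card {w : V // w = v} = 1 := Fintype.card_subtype_eq v
      have h2 := Fintype.card_subtype_compl (fun w : V => w = v)
      have h3 : Fintype.card {w : V // ¬ w = v} = Fintype.card {w : V // w ≠ v} :=
        Fintype.card_congr (Equiv.refl _)
      omega
    obtain ⟨e', he'⟩ := IH (G.comap (Subtype.val : {w : V // w ≠ v} → V)) hcard' hch'
    set g : Fin (n+1) → V := Fin.cons v (fun i => (e' i).val) with hg
    have hg0 : g 0 = v := rfl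
    have hgs : ∀ i : Fin n, g i.succ = (e' i).val := fun i => by
      simp [hg]
    have hginj : Function.Injective g := by
      intro i j hij
      rcases Fin.eq_zero_or_eq_succ i with rfl | ⟨i', rfl⟩ <;>
        rcases Fin.eq_zero_or_eq_succ j with rfl | ⟨j', rfl⟩
      · rfl
      · rw [hg0, hgs] at hij
        exact absurd hij.symm (e' j').2
      · rw [hg0, hgs] at hij
        exact absurd hij (e' i').2
      · rw [hgs, hgs] at hij
        rw [e'.injective (Subtype.ext hij)]
    have hgbij : Function.Bijective g :=
      (Fintype.bijective_iff_injective_and_card g).2 ⟨hginj, by simp [hcard]⟩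
    refine ⟨Equiv.ofBijective g hgbij, ?_⟩
    intro i j k hij hik hjk h1 h2
    have happ : ∀ m, (Equiv.ofBijective g hgbij) m = g m := fun _ => rfl
    rw [happ, happ] at h1 h2 ⊢
    rcases Fin.eq_zero_or_eq_succ j with rfl | ⟨j', rfl⟩
    · exact absurd hij (by simp)
    rcases Fin.eq_zero_or_eq_succ k with rfl | ⟨k', rfl⟩
    · exact absurd hik (by simp)
    rw [hgs] at h1 h2 ⊢
    rcases Fin.eq_zero_or_eq_succ i with rfl | ⟨i', rfl⟩
    · rw [hg0] at h1 h2
      refine hv _ _ h1 h2 ?_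
      intro he
      exact hjk (congrArg Fin.succ (e'.injective (Subtype.ext he)))
    · rw [hgs] at h1 h2
      have hij' : i' < j' := by
        rwa [Fin.succ_lt_succ_iff] at hij
      have hik' : i' < k' := by
        rwa [Fin.succ_lt_succ_iff] at hik
      have hjk' : j' ≠ k' := fun h => hjk (by rw [h])
      exact he' i' j' k' hij' hik' hjk' h1 h2

theorem stmt_13 {V : Type*} [Fintype V] [DecidableEq V] (G : SimpleGraph V) :
    Chordal G ↔ ∃ e : Fin (Fintype.card V) ≃ V,
      ∀ i j k : Fin (Fintype.card V), i < j → i < k → j ≠ k →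
        G.Adj (e i) (e j) → G.Adj (e i) (e k) → G.Adj (e j) (e k) := by
  constructor
  · intro hch
    exact peo_exists (Fintype.card V) G rfl hch
  · rintro ⟨e, he⟩ ⟨n, hn4, f, hfinj, hfadj⟩
    haveI : NeZero n := ⟨by omega⟩
    have hkne : ∀ m : ℕ, 0 < m → m < n → ((m : ℕ) : ZMod n) ≠ 0 := by
      intro m hm1 hm2 h
      rw [ZMod.natCast_eq_zero_iff] at h
      exact absurd (Nat.le_of_dvd hm1 h) (by omega)
    have h1 : (1 : ZMod n) ≠ 0 := by
      have := hkne 1 (by omega) (by omega)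
      simpa using this
    have h2 : (2 : ZMod n) ≠ 0 := by
      have := hkne 2 (by omega) (by omega)
      simpa using this
    have h3 : (3 : ZMod n) ≠ 0 := by
      have := hkne 3 (by omega) (by omega)
      simpa using this
    obtain ⟨i₀, -, hmin⟩ := Finset.exists_min_image Finset.univ
      (fun i : ZMod n => e.symm (f i)) ⟨0, Finset.mem_univ 0⟩
    have hne1 : e.symm (f i₀) ≠ e.symm (f (i₀ + 1)) := by
      intro h
      have := hfinj (e.symm.injective h)
      apply h1
      linear_combination -this
    have hne2 : e.symm (f i₀) ≠ e.symm (f (i₀ - 1)) := by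
      intro h
      have := hfinj (e.symm.injective h)
      apply h1
      linear_combination this
    have hne3 : e.symm (f (i₀ + 1)) ≠ e.symm (f (i₀ - 1)) := by
      intro h
      have := hfinj (e.symm.injective h)
      apply h2
      linear_combination this
    have hij : e.symm (f i₀) < e.symm (f (i₀ + 1)) :=
      lt_of_le_of_ne (hmin _ (Finset.mem_univ _)) hne1
    have hik : e.symm (f i₀) < e.symm (f (i₀ - 1)) :=
      lt_of_le_of_ne (hmin _ (Finset.mem_univ _)) hne2
    have hadj1 : G.Adj (e (e.symm (f i₀))) (e (e.symm (f (i₀ + 1)))) := by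
      rw [e.apply_symm_apply, e.apply_symm_apply]
      exact (hfadj i₀ (i₀ + 1)).2 (Or.inl rfl)
    have hadj2 : G.Adj (e (e.symm (f i₀))) (e (e.symm (f (i₀ - 1)))) := by
      rw [e.apply_symm_apply, e.apply_symm_apply]
      exact (hfadj i₀ (i₀ - 1)).2 (Or.inr (by ring))
    have hconc := he _ _ _ hij hik hne3 hadj1 hadj2
    rw [e.apply_symm_apply, e.apply_symm_apply] at hconc
    rcases (hfadj (i₀ + 1) (i₀ - 1)).1 hconc with h | h
    · apply h3
      linear_combination -h
    · apply h1
      linear_combination h
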